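/- Let n be even, C = {(x₁,x₂) ∈ 𝔽₂^{n/2} × 𝔽₂^{n/2} : x₁ = x₂}, f = |C|·1_C, and 0 ≤ ε ≤ 1/2. Then ‖T_ε f‖₂² = (1 + (1−2ε)⁴)^{n/2}, where ‖g‖₂² = 2^{−n} Σ_x g(x)². -/

import Mathlib

open Finset

noncomputable def noiseOp {ι : Type*} [Fintype ι] [DecidableEq ι] (ε : ℝ)
    (f : (ι → ZMod 2) → ℝ) (x : ι → ZMod 2) : ℝ :=
  ∑ y : ι → ZMod 2,
    ε ^ hammingDist y x * (1 - ε) ^ (Fintype.card ι - hammingDist y x) * f y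

lemma weight_prod {ι : Type*} [Fintype ι] [DecidableEq ι] (ε : ℝ) (y x : ι → ZMod 2) :
    ε ^ hammingDist y x * (1 - ε) ^ (Fintype.card ι - hammingDist y x)
      = ∏ i, (if y i = x i then (1 - ε) else ε) := by
  classical
  rw [Finset.prod_ite, Finset.prod_const, Finset.prod_const]
  have hd : hammingDist y x = (Finset.univ.filter fun i => ¬ y i = x i).card := rfl
  have hc : (Finset.univ.filter fun i => y i = x i).card
      = Fintype.card ι - hammingDist y x := by
    have := Finset.card_filter_add_card_filter_not
      (s := (Finset.univ : Finset ι)) (p := fun i => y i = x i)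
    simp only [Finset.card_univ] at this
    omega
  rw [hc, ← hd, mul_comm]

lemma sum_diag (m : ℕ) (F : ((Fin m ⊕ Fin m) → ZMod 2) → ℝ) :
    (∑ y : (Fin m ⊕ Fin m) → ZMod 2,
        (if (∀ i, y (Sum.inl i) = y (Sum.inr i)) then F y else 0))
      = ∑ c : Fin m → ZMod 2, F (Sum.elim c c) := by
  classical
  rw [← Equiv.sum_comp (Equiv.sumArrowEquivProdArrow (Fin m) (Fin m) (ZMod 2)).symm]
  rw [Fintype.sum_prod_type]
  have hsymm : ∀ a b : Fin m → ZMod 2,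
      (Equiv.sumArrowEquivProdArrow (Fin m) (Fin m) (ZMod 2)).symm (a, b) = Sum.elim a b :=
    fun a b => rfl
  simp only [hsymm, Sum.elim_inl, Sum.elim_inr]
  have : ∀ a b : Fin m → ZMod 2, (∀ i, a i = b i) ↔ a = b := fun a b => funext_iff.symm
  simp only [this]
  simp [Finset.sum_ite_eq]

lemma swap_sum_prod {m : ℕ} {α : Type*} [Fintype α] [DecidableEq α] (f : Fin m → α → ℝ) :
    (∑ c : Fin m → α, ∏ i, f i (c i)) = ∏ i, ∑ u : α, f i u := by
  classical
  rw [Finset.prod_univ_sum, Fintype.piFinset_univ]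

lemma sum_sq_split (m : ℕ) (H : ZMod 2 → ZMod 2 → ℝ) :
    (∑ x : (Fin m ⊕ Fin m) → ZMod 2, ∏ i, H (x (Sum.inl i)) (x (Sum.inr i)))
      = ∏ _i : Fin m, ∑ p : ZMod 2 × ZMod 2, H p.1 p.2 := by
  classical
  rw [← Equiv.sum_comp (Equiv.sumArrowEquivProdArrow (Fin m) (Fin m) (ZMod 2)).symm]
  rw [Fintype.sum_prod_type]
  have hsymm : ∀ a b : Fin m → ZMod 2,
      (Equiv.sumArrowEquivProdArrow (Fin m) (Fin m) (ZMod 2)).symm (a, b) = Sum.elim a b :=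
    fun a b => rfl
  simp only [hsymm, Sum.elim_inl, Sum.elim_inr]
  rw [← Fintype.sum_prod_type']
  rw [← Equiv.sum_comp (Equiv.arrowProdEquivProdArrow (Fin m) (fun _ => ZMod 2) (fun _ => ZMod 2))]
  have happ : ∀ z : Fin m → ZMod 2 × ZMod 2,
      (Equiv.arrowProdEquivProdArrow (Fin m) (fun _ => ZMod 2) (fun _ => ZMod 2)) z
        = (fun i => (z i).1, fun i => (z i).2) := fun z => rfl
  simp only [happ]
  exact swap_sum_prod (fun _ (p : ZMod 2 × ZMod 2) => H p.1 p.2)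

lemma zmod2_sum (F : ZMod 2 → ℝ) : ∑ u : ZMod 2, F u = F 0 + F 1 := by
  have h : (univ : Finset (ZMod 2)) = {0, 1} := by decide
  rw [h, Finset.sum_insert (by decide), Finset.sum_singleton]

lemma per_coord (ε : ℝ) :
    (∑ p : ZMod 2 × ZMod 2,
      (∑ u : ZMod 2, (if u = p.1 then 1-ε else ε) * (if u = p.2 then 1-ε else ε))^2)
    = 1 + (1 - 2*ε)^4 := by
  rw [Fintype.sum_prod_type]
  simp only [zmod2_sum]
  have h01 : (0 : ZMod 2) ≠ 1 := by decide
  simp only [if_pos rfl, if_neg h01, if_neg h01.symm, if_true, eq_self_iff_true]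
  ring

lemma ncard_diag (m : ℕ) :
    Set.ncard {x : (Fin m ⊕ Fin m) → ZMod 2 | ∀ i, x (Sum.inl i) = x (Sum.inr i)} = 2 ^ m := by
  have hrange : {x : (Fin m ⊕ Fin m) → ZMod 2 | ∀ i, x (Sum.inl i) = x (Sum.inr i)}
      = Set.range (fun c : Fin m → ZMod 2 => Sum.elim c c) := by
    ext x
    constructor
    · intro hx
      refine ⟨fun i => x (Sum.inl i), ?_⟩
      funext s
      cases s with
      | inl i => rfl
      | inr i => exact hx i
    · rintro ⟨c, rfl⟩ i; rfl
  have hinj : Function.Injective (fun c : Fin m → ZMod 2 => Sum.elim c c) := by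
    intro a b h
    funext i
    exact congrFun h (Sum.inl i)
  rw [hrange, ← Nat.card_coe_set_eq, Nat.card_range_of_injective hinj]
  simp [Nat.card_eq_fintype_card]

theorem stmt13 (m : ℕ) (ε : ℝ) (hε0 : 0 ≤ ε) (hε : ε ≤ 1 / 2)
    (C : Set ((Fin m ⊕ Fin m) → ZMod 2))
    (hC : C = {x | ∀ i, x (Sum.inl i) = x (Sum.inr i)})
    (f : ((Fin m ⊕ Fin m) → ZMod 2) → ℝ)
    (hf : f = Set.indicator C (fun _ => (Set.ncard C : ℝ))) :
    (1 / 2 ^ (2 * m)) * ∑ x : (Fin m ⊕ Fin m) → ZMod 2, (noiseOp ε f x) ^ 2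
      = (1 + (1 - 2 * ε) ^ 4) ^ m := by
  classical
  subst hC
  subst hf
  have key : ∀ x : (Fin m ⊕ Fin m) → ZMod 2,
      noiseOp ε (Set.indicator {x | ∀ i, x (Sum.inl i) = x (Sum.inr i)}
        (fun _ => (Set.ncard {x : (Fin m ⊕ Fin m) → ZMod 2 |
          ∀ i, x (Sum.inl i) = x (Sum.inr i)} : ℝ))) x
        = 2 ^ m * ∏ i : Fin m, ∑ u : ZMod 2,
            (if u = x (Sum.inl i) then 1-ε else ε) * (if u = x (Sum.inr i) then 1-ε else ε) := by
    intro x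
    unfold noiseOp
    have h1 : ∀ y : (Fin m ⊕ Fin m) → ZMod 2,
        Set.indicator {x : (Fin m ⊕ Fin m) → ZMod 2 | ∀ i, x (Sum.inl i) = x (Sum.inr i)}
          (fun _ => (Set.ncard {x : (Fin m ⊕ Fin m) → ZMod 2 |
            ∀ i, x (Sum.inl i) = x (Sum.inr i)} : ℝ)) y
        = if (∀ i, y (Sum.inl i) = y (Sum.inr i)) then ((2:ℝ)^m) else 0 := by
      intro y
      rw [Set.indicator_apply]
      simp only [Set.mem_setOf_eq, ncard_diag m]
      norm_num
    simp only [h1, mul_ite, mul_zero]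
    rw [sum_diag m (fun y => ε ^ hammingDist y x
      * (1 - ε) ^ (Fintype.card (Fin m ⊕ Fin m) - hammingDist y x) * 2 ^ m)]
    simp only [weight_prod ε _ x]
    have hsplit : ∀ c : Fin m → ZMod 2,
        (∏ s : Fin m ⊕ Fin m, (if Sum.elim c c s = x s then 1 - ε else ε))
          = ∏ i : Fin m, ((if c i = x (Sum.inl i) then 1-ε else ε)
              * (if c i = x (Sum.inr i) then 1-ε else ε)) := by
      intro c
      rw [Fintype.prod_sum_type, ← Finset.prod_mul_distrib]
      simp only [Sum.elim_inl, Sum.elim_inr]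
      congr
    simp only [hsplit]
    rw [← Finset.sum_mul]
    rw [swap_sum_prod (fun i u => (if u = x (Sum.inl i) then 1-ε else ε)
      * (if u = x (Sum.inr i) then 1-ε else ε))]
    simp only [mul_ite]
    ring
  simp only [key]
  have hexp : ∀ x : (Fin m ⊕ Fin m) → ZMod 2,
      ((2:ℝ) ^ m * ∏ i : Fin m, ∑ u : ZMod 2,
        (if u = x (Sum.inl i) then 1-ε else ε) * (if u = x (Sum.inr i) then 1-ε else ε)) ^ 2
      = 2 ^ (2*m) * ∏ i : Fin m, (∑ u : ZMod 2,
        (if u = x (Sum.inl i) then 1-ε else ε) * (if u = x (Sum.inr i) then 1-ε else ε)) ^ 2 := by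
    intro x
    rw [mul_pow, ← Finset.prod_pow, ← pow_mul, mul_comm m 2]
  simp only [hexp]
  rw [← Finset.mul_sum]
  rw [sum_sq_split m (fun a b => (∑ u : ZMod 2,
    (if u = a then 1-ε else ε) * (if u = b then 1-ε else ε)) ^ 2)]
  rw [Finset.prod_const, Finset.card_univ, Fintype.card_fin]
  rw [per_coord ε]
  have h2 : (2:ℝ) ^ (2*m) ≠ 0 := by positivity
  field_simp
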